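/- (Troisi's anisotropic Sobolev inequality, product form.) Let n ≥ 2, let p₁, …, pₙ satisfy 1 ≤ pᵢ < ∞, define 1/p = (1/n)·∑_{i=1}^n 1/pᵢ and assume ∑_{i=1}^n 1/pᵢ > 1 (i.e. p < n), and set p* = np/(n−p). Then there exists a constant C = C(n, p₁, …, pₙ) such that for all u ∈ C_c^∞(ℝⁿ): ( ∫_{ℝⁿ} |u|^{p*} dx )^{n/p*} ≤ C · ∏_{i=1}^n ( ∫_{ℝⁿ} |∂u/∂xᵢ|^{pᵢ} dx )^{1/pᵢ}. -/

import Mathlib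

open MeasureTheory
open scoped ENNReal

/-- The harmonic-mean exponent `p` defined by `1/p = (1/n) ∑ᵢ 1/pᵢ`. -/
noncomputable def pbar (n : ℕ) (p : Fin n → ℝ) : ℝ := n / ∑ i, 1 / p i

/-- The anisotropic Sobolev exponent `p* = np/(n−p)`. -/
noncomputable def pstar (n : ℕ) (p : Fin n → ℝ) : ℝ :=
  n * pbar n p / (n - pbar n p)

section TroisiAux

open Function Set Real

/-- Simplified form of the Sobolev exponent. -/
noncomputable def qT (n : ℕ) (p : Fin n → ℝ) : ℝ := n / (∑ i, 1 / p i - 1)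

/-- The auxiliary exponents in Troisi's proof. -/
noncomputable def tT (n : ℕ) (p : Fin n → ℝ) (i : Fin n) : ℝ :=
  1 + qT n p * (1 - 1 / p i)

lemma aux_rpow_sum {ι : Type*} (s : Finset ι) (a : ℝ≥0∞) (c : ι → ℝ)
    (hc : ∀ i ∈ s, 0 ≤ c i) :
    a ^ (∑ i ∈ s, c i) = ∏ i ∈ s, a ^ c i := by
  induction s using Finset.cons_induction with
  | empty => simp
  | cons i s hi ih =>
    rw [Finset.sum_cons, Finset.prod_cons,
      ENNReal.rpow_add_of_nonneg _ _ (hc i (Finset.mem_cons_self i s))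
        (Finset.sum_nonneg fun j hj => hc j (Finset.mem_cons_of_mem hj)),
      ih (fun j hj => hc j (Finset.mem_cons_of_mem hj))]

lemma aux_prod_rpow {ι : Type*} (s : Finset ι) (b : ι → ℝ≥0∞) {c : ℝ} (hc : 0 ≤ c) :
    (∏ i ∈ s, b i) ^ c = ∏ i ∈ s, b i ^ c := by
  induction s using Finset.cons_induction with
  | empty => simp [ENNReal.one_rpow]
  | cons i s hi ih =>
    rw [Finset.prod_cons, Finset.prod_cons, ENNReal.mul_rpow_of_nonneg _ _ hc, ih]

lemma ofReal_norm_eq_coe_nnnorm {E : Type*} [SeminormedAddCommGroup E] (a : E) :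
    ENNReal.ofReal ‖a‖ = (‖a‖₊ : ℝ≥0∞) := by
  rw [← coe_nnnorm a, ENNReal.ofReal_coe_nnreal]

lemma aux_lint_ne_top {n : ℕ} {h : (Fin n → ℝ) → ℝ} (hc : Continuous h)
    (h2 : HasCompactSupport h) {c : ℝ} (hc0 : 0 < c) :
    ∫⁻ x, (‖h x‖₊ : ℝ≥0∞) ^ c ≠ ⊤ := by
  have hg : Continuous fun x => |h x| ^ c :=
    (hc.abs).rpow_const (fun x => Or.inr hc0.le)
  have h2g : HasCompactSupport fun x => |h x| ^ c := by
    have : (fun x => |h x| ^ c) = (fun y : ℝ => |y| ^ c) ∘ h := rfl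
    rw [this]
    exact h2.comp_left (by simp [Real.zero_rpow hc0.ne'])
  have hint : Integrable (fun x => |h x| ^ c) (volume : Measure (Fin n → ℝ)) :=
    hg.integrable_of_hasCompactSupport h2g
  have := hint.lintegral_lt_top
  have heq : ∀ x, (‖h x‖₊ : ℝ≥0∞) ^ c = ENNReal.ofReal (|h x| ^ c) := by
    intro x
    rw [← ofReal_norm_eq_coe_nnnorm, ENNReal.ofReal_rpow_of_nonneg (norm_nonneg _) hc0.le,
      Real.norm_eq_abs]
  simp_rw [heq]
  exact this.ne

lemma aux_coe_rpow (x : ℝ) {c : ℝ} (hc : 0 ≤ c) :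
    (‖x‖₊ : ℝ≥0∞) ^ c = ENNReal.ofReal (|x| ^ c) := by
  rw [← ofReal_norm_eq_coe_nnnorm, ENNReal.ofReal_rpow_of_nonneg (norm_nonneg _) hc,
    Real.norm_eq_abs]

/-- FTC line bound, exponent 1. -/
lemma troisi_line {n : ℕ} {v : (Fin n → ℝ) → ℝ} (hv : ContDiff ℝ 1 v)
    (h2v : HasCompactSupport v) (i : Fin n) (x : Fin n → ℝ) :
    (‖v x‖₊ : ℝ≥0∞) ≤ ∫⁻ r, ‖fderiv ℝ v (update x i r) (Pi.single i 1)‖₊ := by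
  calc (‖v x‖₊ : ℝ≥0∞)
      ≤ ∫⁻ r in Iic (x i), ‖deriv (v ∘ update x i) r‖₊ := by
        apply le_trans (by simp) (HasCompactSupport.enorm_le_lintegral_Ici_deriv _ _ _)
        · exact hv.comp (by convert contDiff_update 1 x i)
        · exact h2v.comp_isClosedEmbedding (isClosedEmbedding_update x i)
    _ ≤ ∫⁻ r, ‖deriv (v ∘ update x i) r‖₊ := lintegral_mono' Measure.restrict_le_self le_rfl
    _ = ∫⁻ r, ‖fderiv ℝ v (update x i r) (Pi.single i 1)‖₊ := by
        congr 1; ext r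
        rw [fderiv_comp_deriv _ (hv.differentiable one_ne_zero _)
          (hasDerivAt_update x i r).differentiableAt, deriv_update]

/-- FTC line bound, exponent `t > 1`. -/
lemma troisi_line_rpow {n : ℕ} {v : (Fin n → ℝ) → ℝ} (hv : ContDiff ℝ 1 v)
    (h2v : HasCompactSupport v) (i : Fin n) (x : Fin n → ℝ) {t : ℝ} (ht : 1 < t) :
    (‖v x‖₊ : ℝ≥0∞) ^ t ≤ ∫⁻ r, ENNReal.ofReal t *
      ((‖v (update x i r)‖₊ : ℝ≥0∞) ^ (t - 1) *
        ‖fderiv ℝ v (update x i r) (Pi.single i 1)‖₊) := by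
  have ht0 : (0:ℝ) < t := lt_trans one_pos ht
  set w : (Fin n → ℝ) → ℝ := fun z => ‖v z‖ ^ t with hw
  have hw1 : ContDiff ℝ 1 w := hv.norm_rpow ht
  have h2w : HasCompactSupport w := by
    have : w = (fun y : ℝ => ‖y‖ ^ t) ∘ v := rfl
    rw [this]
    exact h2v.comp_left (by simp [Real.zero_rpow ht0.ne'])
  have hbound : ∀ z : Fin n → ℝ, (‖fderiv ℝ w z (Pi.single i 1)‖₊ : ℝ≥0∞) ≤
      ENNReal.ofReal t * ((‖v z‖₊ : ℝ≥0∞) ^ (t - 1) *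
        ‖fderiv ℝ v z (Pi.single i 1)‖₊) := by
    intro z
    have hfd : fderiv ℝ w z = (t * ‖v z‖ ^ (t - 2)) •
        (innerSL ℝ (v z)).comp (fderiv ℝ v z) :=
      (hv.differentiable one_ne_zero).fderiv_norm_rpow ht
    have hre : ‖fderiv ℝ w z (Pi.single i 1)‖ ≤
        t * (‖v z‖ ^ (t - 1) * ‖fderiv ℝ v z (Pi.single i 1)‖) := by
      rw [hfd]
      simp only [ContinuousLinearMap.coe_smul', Pi.smul_apply, ContinuousLinearMap.coe_comp',
        Function.comp_apply, smul_eq_mul, norm_mul]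
      have h1 : ‖(innerSL ℝ (v z)) (fderiv ℝ v z (Pi.single i 1))‖ ≤
          ‖v z‖ * ‖fderiv ℝ v z (Pi.single i 1)‖ := by
        simpa using abs_real_inner_le_norm (v z) (fderiv ℝ v z (Pi.single i 1))
      have h2 : ‖v z‖ ^ (t - 2) * ‖v z‖ ≤ ‖v z‖ ^ (t - 1) := by
        rcases eq_or_ne (v z) 0 with h | h
        · simp [h, Real.zero_rpow (by linarith : t - 1 ≠ 0)]
        · rw [← Real.rpow_add_one (by simpa using h)]
          exact le_of_eq (by ring_nf)
      calc ‖t‖ * ‖‖v z‖ ^ (t-2)‖ * ‖(innerSL ℝ (v z)) (fderiv ℝ v z (Pi.single i 1))‖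
          ≤ t * ‖v z‖ ^ (t-2) * (‖v z‖ * ‖fderiv ℝ v z (Pi.single i 1)‖) := by
            rw [Real.norm_eq_abs, abs_of_pos ht0, Real.norm_eq_abs,
              abs_of_nonneg (Real.rpow_nonneg (norm_nonneg _) _)]
            gcongr
        _ ≤ t * (‖v z‖ ^ (t - 1) * ‖fderiv ℝ v z (Pi.single i 1)‖) := by
            rw [mul_assoc, ← mul_assoc (‖v z‖ ^ (t-2))]
            exact mul_le_mul_of_nonneg_left
              (mul_le_mul_of_nonneg_right h2 (norm_nonneg _)) ht0.le
    calc (‖fderiv ℝ w z (Pi.single i 1)‖₊ : ℝ≥0∞)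
        = ENNReal.ofReal ‖fderiv ℝ w z (Pi.single i 1)‖ := (ofReal_norm_eq_coe_nnnorm _).symm
      _ ≤ ENNReal.ofReal (t * (‖v z‖ ^ (t - 1) * ‖fderiv ℝ v z (Pi.single i 1)‖)) :=
          ENNReal.ofReal_le_ofReal hre
      _ = ENNReal.ofReal t * ((‖v z‖₊ : ℝ≥0∞) ^ (t - 1) * ‖fderiv ℝ v z (Pi.single i 1)‖₊) := by
          rw [ENNReal.ofReal_mul ht0.le, ENNReal.ofReal_mul (Real.rpow_nonneg (norm_nonneg _) _)]
          congr 1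
          congr 1
          · rw [← ofReal_norm_eq_coe_nnnorm, ← ENNReal.ofReal_rpow_of_nonneg (norm_nonneg _) (by linarith)]
          · rw [ofReal_norm_eq_coe_nnnorm]
  calc (‖v x‖₊ : ℝ≥0∞) ^ t
      = (‖w x‖₊ : ℝ≥0∞) := by
        rw [← ofReal_norm_eq_coe_nnnorm, ← ofReal_norm_eq_coe_nnnorm]
        have : ‖w x‖ = ‖v x‖ ^ t := by
          simp only [hw, Real.norm_eq_abs]
          exact abs_of_nonneg (by positivity)
        rw [this, ENNReal.ofReal_rpow_of_nonneg (norm_nonneg _) ht0.le]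
    _ ≤ ∫⁻ r in Iic (x i), ‖deriv (w ∘ update x i) r‖₊ := by
        apply le_trans (by simp) (HasCompactSupport.enorm_le_lintegral_Ici_deriv _ _ _)
        · exact hw1.comp (by convert contDiff_update 1 x i)
        · exact h2w.comp_isClosedEmbedding (isClosedEmbedding_update x i)
    _ ≤ ∫⁻ r, ‖deriv (w ∘ update x i) r‖₊ := lintegral_mono' Measure.restrict_le_self le_rfl
    _ = ∫⁻ r, ‖fderiv ℝ w (update x i r) (Pi.single i 1)‖₊ := by
        congr 1; ext r
        rw [fderiv_comp_deriv _ (hw1.differentiable one_ne_zero _)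
          (hasDerivAt_update x i r).differentiableAt, deriv_update]
    _ ≤ _ := lintegral_mono fun r => hbound _

/-- The core anisotropic Sobolev estimate, on the pi space, in `ℝ≥0∞`. -/
theorem troisi_key (n : ℕ) (hn : 2 ≤ n) (p : Fin n → ℝ) (hp : ∀ i, 1 ≤ p i)
    (hsum : 1 < ∑ i, 1 / p i)
    (v : (Fin n → ℝ) → ℝ) (hv : ContDiff ℝ 1 v) (h2v : HasCompactSupport v)
    (hA0 : ∫⁻ x, (‖v x‖₊ : ℝ≥0∞) ^ qT n p ≠ 0) :
    (∫⁻ x, (‖v x‖₊ : ℝ≥0∞) ^ qT n p) ^ (∑ i, 1 / p i - 1) ≤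
      (n : ℝ≥0∞) ^ (n : ℝ) * (∏ i, ENNReal.ofReal (tT n p i)) *
        ∏ i, (∫⁻ x, (‖fderiv ℝ v x (Pi.single i 1)‖₊ : ℝ≥0∞) ^ p i) ^ (1 / p i) := by
  classical
  set s := ∑ i, 1 / p i with hsdef
  set q := qT n p with hqdef
  set t := tT n p with htdef
  have hip : ∀ i, 0 < p i := fun i => lt_of_lt_of_le one_pos (hp i)
  have hinv1 : ∀ i, 1 / p i ≤ 1 := fun i => by
    rw [div_le_one (hip i)]; exact hp i
  have hinv0 : ∀ i, 0 < 1 / p i := fun i => div_pos one_pos (hip i)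
  have hs1 : 1 < s := hsum
  have hn0 : (0:ℝ) < n := by positivity
  have hn2 : (2:ℝ) ≤ (n:ℝ) := by exact_mod_cast hn
  have hsn : s ≤ n := by
    calc s ≤ ∑ _i : Fin n, (1:ℝ) := Finset.sum_le_sum fun i _ => hinv1 i
    _ = n := by simp
  have hq0 : 0 < q := by
    rw [hqdef, qT, ← hsdef]
    exact div_pos hn0 (by linarith)
  have hqs : q * (s - 1) = n := by
    rw [hqdef, qT, ← hsdef, div_mul_cancel₀ _ (by linarith : s - 1 ≠ 0)]
  have ht1 : ∀ i, 1 ≤ t i := fun i => by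
    rw [htdef, tT, ← hqdef]
    nlinarith [hinv1 i, hq0]
  have htm : ∀ i, t i - 1 = q * (1 - 1 / p i) := fun i => by
    rw [htdef, tT, ← hqdef]; ring
  have hsum_t : ∑ i, t i = ((n:ℝ) - 1) * q := by
    have h1 : ∑ i, t i = n + q * ((n:ℝ) - s) := by
      rw [htdef]
      simp only [tT, ← hqdef]
      rw [Finset.sum_add_distrib, ← Finset.mul_sum, Finset.sum_sub_distrib, ← hsdef]
      simp [mul_sub]
    rw [h1]
    linear_combination (-1 : ℝ) * hqs
  have hn1 : (0:ℝ) < (n:ℝ) - 1 := by linarith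
  -- the directional derivatives
  set D : Fin n → (Fin n → ℝ) → ℝ := fun i z => fderiv ℝ v z (Pi.single i 1) with hDdef
  have hfc : Continuous (fderiv ℝ v) := hv.continuous_fderiv one_ne_zero
  have hDc : ∀ i, Continuous (D i) := by
    intro i
    exact (ContinuousLinearMap.apply ℝ ℝ (Pi.single i (1:ℝ))).continuous.comp hfc
  have hDcs : ∀ i, HasCompactSupport (D i) := fun i => by
    have : D i = (fun L : (Fin n → ℝ) →L[ℝ] ℝ => L (Pi.single i 1)) ∘ (fderiv ℝ v) := rfl
    rw [this]
    exact (h2v.fderiv (𝕜 := ℝ)).comp_left rfl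
  have hDm : ∀ i, Measurable fun z => (‖D i z‖₊ : ℝ≥0∞) := fun i =>
    (hDc i).measurable.nnnorm.coe_nnreal_ennreal
  have hvm : Measurable fun z => (‖v z‖₊ : ℝ≥0∞) :=
    hv.continuous.measurable.nnnorm.coe_nnreal_ennreal
  set A := ∫⁻ x, (‖v x‖₊ : ℝ≥0∞) ^ q with hAdef
  set B : Fin n → ℝ≥0∞ := fun i => (∫⁻ x, (‖D i x‖₊ : ℝ≥0∞) ^ p i) ^ (1 / p i) with hBdef
  have hAtop : A ≠ ⊤ := aux_lint_ne_top hv.continuous h2v hq0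
  have hBitop : ∀ i, (∫⁻ x, (‖D i x‖₊ : ℝ≥0∞) ^ p i) ≠ ⊤ := fun i =>
    aux_lint_ne_top (hDc i) (hDcs i) (hip i)
  have hBtop : ∀ i, B i ≠ ⊤ := fun i =>
    ENNReal.rpow_ne_top_of_nonneg (hinv0 i).le (hBitop i)
  have hB0 : ∀ i, B i ≠ 0 := by
    intro i hBi
    have h0 : ∫⁻ x, (‖D i x‖₊ : ℝ≥0∞) ^ p i = 0 := by
      by_contra h
      rw [hBdef] at hBi
      simp only [ENNReal.rpow_eq_zero_iff] at hBi
      rcases hBi with ⟨h1, _⟩ | ⟨h1, h2⟩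
      · exact h h1
      · exact (hinv0 i).not_gt h2
    have hae := (lintegral_eq_zero_iff ((hDm i).pow_const (p i))).mp h0
    have hzero : D i = 0 := by
      have hae2 : (D i) =ᵐ[volume] 0 := by
        filter_upwards [hae] with x hx
        have hx' : (‖D i x‖₊ : ℝ≥0∞) ^ p i = 0 := hx
        rw [ENNReal.rpow_eq_zero_iff] at hx'
        rcases hx' with ⟨h1, _⟩ | ⟨h1, _⟩
        · simpa using h1
        · exact absurd h1 (by simp)
      exact (hDc i).ae_eq_iff_eq volume continuous_const |>.mp hae2
    apply hA0
    have hv0 : ∀ x, v x = 0 := by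
      intro x
      have := troisi_line hv h2v i x
      rw [show (fun r => (‖fderiv ℝ v (update x i r) (Pi.single i 1)‖₊ : ℝ≥0∞)) =
          fun r => 0 by ext r; rw [show fderiv ℝ v (update x i r) (Pi.single i 1) = 0 from
            congrFun hzero (update x i r)]; simp] at this
      simpa using this
    rw [hAdef]
    simp [hv0, ENNReal.zero_rpow_of_pos hq0]
  have hA0' : A ≠ 0 := hA0
  -- the integrand pieces
  set G : Fin n → (Fin n → ℝ) → ℝ≥0∞ := fun i z =>
    ENNReal.ofReal (t i) * ((‖v z‖₊ : ℝ≥0∞) ^ (t i - 1) * (‖D i z‖₊ : ℝ≥0∞)) with hGdef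
  have hGm : ∀ i, Measurable (G i) := fun i =>
    (measurable_const.mul ((hvm.pow_const _).mul (hDm i)))
  -- pointwise line estimate
  have hpoint : ∀ i x, (‖v x‖₊ : ℝ≥0∞) ^ (t i) ≤ ∫⁻ r, G i (update x i r) := by
    intro i x
    rcases eq_or_lt_of_le (ht1 i) with h1 | h1
    · have hGi : ∀ z, G i z = (‖D i z‖₊ : ℝ≥0∞) := by
        intro z
        rw [hGdef]
        simp [← h1]
      simp only [hGi, ← h1, ENNReal.rpow_one]
      exact troisi_line hv h2v i x
    · exact troisi_line_rpow hv h2v i x h1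
  -- Hölder estimate for each direction
  have hGa : ∀ i, ∫⁻ z, G i z ≤ ENNReal.ofReal (t i) * (A ^ (1 - 1 / p i) * B i) := by
    intro i
    rw [hGdef]
    simp only
    rw [lintegral_const_mul' _ _ ENNReal.ofReal_ne_top]
    apply mul_le_mul_right
    rcases eq_or_lt_of_le (hp i) with hpi | hpi
    · have ht0 : t i - 1 = 0 := by rw [htm i, ← hpi]; ring
      have : ∀ z, (‖v z‖₊ : ℝ≥0∞) ^ (t i - 1) * (‖D i z‖₊ : ℝ≥0∞) = (‖D i z‖₊ : ℝ≥0∞) := by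
        intro z; rw [ht0, ENNReal.rpow_zero, one_mul]
      simp only [this]
      have hBi : B i = ∫⁻ x, (‖D i x‖₊ : ℝ≥0∞) := by
        rw [hBdef]; simp only [← hpi]
        simp [ENNReal.rpow_one]
      rw [hBi]
      have hA1 : A ^ (1 - 1 / p i) = 1 := by
        rw [← hpi]; norm_num
      rw [hA1, one_mul]
    · -- 1 < p i
      set r := p i / (p i - 1) with hrdef
      have hconj : r.HolderConjugate (p i) := (Real.HolderConjugate.conjExponent hpi).symm
      have hH := ENNReal.lintegral_mul_le_Lp_mul_Lq volume hconj
        ((hvm.pow_const (t i - 1)).aemeasurable) ((hDm i).aemeasurable)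
      have hne : p i - 1 ≠ 0 := by linarith
      have hne' : p i ≠ 0 := (hip i).ne'
      have hrq : (t i - 1) * r = q := by
        rw [htm i, hrdef]
        field_simp
      have h1r : 1 / r = 1 - 1 / p i := by
        rw [hrdef, one_div_div]
        field_simp
      calc ∫⁻ z, (‖v z‖₊ : ℝ≥0∞) ^ (t i - 1) * (‖D i z‖₊ : ℝ≥0∞)
          ≤ (∫⁻ z, ((‖v z‖₊ : ℝ≥0∞) ^ (t i - 1)) ^ r) ^ (1/r) *
            (∫⁻ z, (‖D i z‖₊ : ℝ≥0∞) ^ p i) ^ (1/(p i)) := hH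
        _ = A ^ (1 - 1 / p i) * B i := by
            have h2 : ∀ z, ((‖v z‖₊ : ℝ≥0∞) ^ (t i - 1)) ^ r = (‖v z‖₊ : ℝ≥0∞) ^ q := fun z => by
              rw [← ENNReal.rpow_mul, hrq]
            simp_rw [h2]
            rw [← hAdef, h1r]
  -- weights
  set a : Fin n → ℝ≥0∞ := fun i => ENNReal.ofReal (t i) * (A ^ (1 - 1 / p i) * B i) with hadef
  have hta : ∀ i, ENNReal.ofReal (t i) ≠ 0 := fun i => by
    simp only [ne_eq, ENNReal.ofReal_eq_zero, not_le]
    linarith [ht1 i]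
  have hApow_ne0 : ∀ i, A ^ (1 - 1 / p i) ≠ 0 := fun i => by
    simp only [ne_eq, ENNReal.rpow_eq_zero_iff, not_or, not_and, not_lt]
    exact ⟨fun h => absurd h hA0', fun h => absurd h hAtop⟩
  have hApow_top : ∀ i, A ^ (1 - 1 / p i) ≠ ⊤ := fun i =>
    ENNReal.rpow_ne_top_of_nonneg (by linarith [hinv1 i]) hAtop
  have ha0 : ∀ i, a i ≠ 0 := fun i =>
    mul_ne_zero (hta i) (mul_ne_zero (hApow_ne0 i) (hB0 i))
  have haT : ∀ i, a i ≠ ⊤ := fun i => by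
    rw [hadef]
    exact ENNReal.mul_ne_top ENNReal.ofReal_ne_top
      (ENNReal.mul_ne_top (hApow_top i) (hBtop i))
  set σ : Fin n → ℝ≥0∞ := fun i => (a i)⁻¹ with hσdef
  have hσT : ∀ i, σ i ≠ ⊤ := fun i => by
    simp [hσdef, ha0 i]
  set f : (Fin n → ℝ) → ℝ≥0∞ := fun z => ∑ i, σ i * G i z with hfdef
  have hfm : Measurable f := by
    apply Finset.measurable_sum
    exact fun i _ => measurable_const.mul (hGm i)
  have hGf : ∀ i z, G i z ≤ a i * f z := by
    intro i z
    calc G i z = (a i * σ i) * G i z := by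
          rw [ENNReal.mul_inv_cancel (ha0 i) (haT i), one_mul]
      _ = a i * (σ i * G i z) := by rw [mul_assoc]
      _ ≤ a i * f z := by
          apply mul_le_mul_right
          exact Finset.single_le_sum (f := fun j => σ j * G j z)
            (fun j _ => zero_le) (Finset.mem_univ i)
  -- pointwise product estimate
  have hprod : ∀ x, (‖v x‖₊ : ℝ≥0∞) ^ q ≤
      (∏ i, (a i) ^ (1/((n:ℝ)-1))) * ∏ i, (∫⁻ r, f (update x i r)) ^ (1/((n:ℝ)-1)) := by
    intro x
    have e1 : (‖v x‖₊ : ℝ≥0∞) ^ q = ∏ i, ((‖v x‖₊ : ℝ≥0∞) ^ (t i)) ^ (1/((n:ℝ)-1)) := by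
      have : ∀ i : Fin n, ((‖v x‖₊ : ℝ≥0∞) ^ (t i)) ^ (1/((n:ℝ)-1)) =
          (‖v x‖₊ : ℝ≥0∞) ^ (t i * (1/((n:ℝ)-1))) := fun i =>
        (ENNReal.rpow_mul _ _ _).symm
      simp_rw [this]
      rw [← aux_rpow_sum Finset.univ _ _ (fun i _ =>
        mul_nonneg (by linarith [ht1 i]) (by positivity))]
      congr 1
      rw [← Finset.sum_mul, hsum_t]
      field_simp
    rw [e1]
    calc ∏ i, ((‖v x‖₊ : ℝ≥0∞) ^ (t i)) ^ (1/((n:ℝ)-1))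
        ≤ ∏ i, (∫⁻ r, G i (update x i r)) ^ (1/((n:ℝ)-1)) :=
          Finset.prod_le_prod' fun i _ =>
            ENNReal.rpow_le_rpow (hpoint i x) (by positivity)
      _ ≤ ∏ i, (a i * ∫⁻ r, f (update x i r)) ^ (1/((n:ℝ)-1)) := by
          apply Finset.prod_le_prod'
          intro i _
          apply ENNReal.rpow_le_rpow _ (by positivity)
          calc ∫⁻ r, G i (update x i r) ≤ ∫⁻ r, a i * f (update x i r) :=
                lintegral_mono fun r => hGf i (update x i r)
            _ = a i * ∫⁻ r, f (update x i r) := lintegral_const_mul' _ _ (haT i)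
      _ = (∏ i, (a i) ^ (1/((n:ℝ)-1))) * ∏ i, (∫⁻ r, f (update x i r)) ^ (1/((n:ℝ)-1)) := by
          rw [← Finset.prod_mul_distrib]
          apply Finset.prod_congr rfl
          intro i _
          rw [ENNReal.mul_rpow_of_nonneg _ _ (by positivity)]
  -- integrate and apply the grid-lines lemma
  have hKtop : (∏ i, (a i) ^ (1/((n:ℝ)-1))) ≠ ⊤ := by
    refine (ENNReal.prod_lt_top fun i _ => ?_).ne
    exact lt_of_le_of_ne le_top (ENNReal.rpow_ne_top_of_nonneg (by positivity) (haT i))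
  have hconjn : Real.HolderConjugate (Fintype.card (Fin n)) ((n:ℝ)/((n:ℝ)-1)) := by
    rw [Fintype.card_fin]
    have : (1:ℝ) < n := by linarith
    exact Real.HolderConjugate.conjExponent this
  have hgrid := lintegral_prod_lintegral_pow_le
    (fun _ : Fin n => (volume : Measure ℝ)) hconjn hfm
  rw [← volume_pi] at hgrid
  simp only [Fintype.card_fin] at hgrid
  have hstep2 : A ≤ (∏ i, (a i) ^ (1/((n:ℝ)-1))) * (∫⁻ z, f z) ^ ((n:ℝ)/((n:ℝ)-1)) := by
    calc A ≤ ∫⁻ x, (∏ i, (a i) ^ (1/((n:ℝ)-1))) *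
          ∏ i, (∫⁻ r, f (update x i r)) ^ (1/((n:ℝ)-1)) := lintegral_mono hprod
      _ = (∏ i, (a i) ^ (1/((n:ℝ)-1))) *
          ∫⁻ x, ∏ i, (∫⁻ r, f (update x i r)) ^ (1/((n:ℝ)-1)) :=
          lintegral_const_mul' _ _ hKtop
      _ ≤ (∏ i, (a i) ^ (1/((n:ℝ)-1))) * (∫⁻ z, f z) ^ ((n:ℝ)/((n:ℝ)-1)) := by
          apply mul_le_mul_right
          exact hgrid
  -- ∫ f ≤ n
  have hfn : ∫⁻ z, f z ≤ (n : ℝ≥0∞) := by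
    rw [hfdef]
    simp only
    rw [lintegral_finset_sum _ (f := fun i z => σ i * G i z) (fun i _ => measurable_const.mul (hGm i))]
    calc ∑ i, ∫⁻ z, σ i * G i z = ∑ i, σ i * ∫⁻ z, G i z := by
          apply Finset.sum_congr rfl
          intro i _
          exact lintegral_const_mul' _ _ (hσT i)
      _ ≤ ∑ i : Fin n, (1 : ℝ≥0∞) := by
          apply Finset.sum_le_sum
          intro i _
          calc σ i * ∫⁻ z, G i z ≤ σ i * a i := mul_le_mul_right (hGa i) _
            _ = 1 := ENNReal.inv_mul_cancel (ha0 i) (haT i)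
      _ = (n : ℝ≥0∞) := by simp
  -- combine
  have hmain : A ≤ (∏ i, (a i) ^ (1/((n:ℝ)-1))) * (n : ℝ≥0∞) ^ ((n:ℝ)/((n:ℝ)-1)) := by
    refine hstep2.trans (mul_le_mul_right ?_ _)
    exact ENNReal.rpow_le_rpow hfn (by positivity)
  -- raise to the power (n-1)
  have hpow := ENNReal.rpow_le_rpow hmain (le_of_lt hn1)
  rw [ENNReal.mul_rpow_of_nonneg _ _ hn1.le] at hpow
  have e2 : ((∏ i, (a i) ^ (1/((n:ℝ)-1)))) ^ ((n:ℝ)-1) = ∏ i, a i := by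
    rw [← aux_prod_rpow Finset.univ a (by positivity), ← ENNReal.rpow_mul]
    rw [show (1/((n:ℝ)-1)) * ((n:ℝ)-1) = 1 by field_simp]
    exact ENNReal.rpow_one _
  have e3 : ((n : ℝ≥0∞) ^ ((n:ℝ)/((n:ℝ)-1))) ^ ((n:ℝ)-1) = (n : ℝ≥0∞) ^ (n:ℝ) := by
    rw [← ENNReal.rpow_mul]
    congr 1
    field_simp
  rw [e2, e3] at hpow
  -- expand ∏ a i
  have e4 : ∏ i, a i = (∏ i, ENNReal.ofReal (t i)) * (A ^ ((n:ℝ) - s) * ∏ i, B i) := by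
    rw [hadef]
    simp only
    rw [Finset.prod_mul_distrib, Finset.prod_mul_distrib]
    congr 1
    congr 1
    rw [← aux_rpow_sum Finset.univ A _ (fun i _ => by linarith [hinv1 i])]
    congr 1
    rw [Finset.sum_sub_distrib, ← hsdef]
    simp
  rw [e4] at hpow
  -- split A ^ (n-1)
  have e5 : A ^ ((n:ℝ)-1) = A ^ (s-1) * A ^ ((n:ℝ)-s) := by
    rw [← ENNReal.rpow_add_of_nonneg _ _ (by linarith) (by linarith)]
    congr 1
    ring
  rw [e5] at hpow
  have hcan : A ^ (s-1) * A ^ ((n:ℝ)-s) ≤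
      ((n : ℝ≥0∞) ^ (n:ℝ) * (∏ i, ENNReal.ofReal (t i)) * ∏ i, B i) * A ^ ((n:ℝ)-s) := by
    calc A ^ (s-1) * A ^ ((n:ℝ)-s) ≤
        (∏ i, ENNReal.ofReal (t i)) * (A ^ ((n:ℝ) - s) * ∏ i, B i) * (n : ℝ≥0∞) ^ (n:ℝ) := hpow
      _ = ((n : ℝ≥0∞) ^ (n:ℝ) * (∏ i, ENNReal.ofReal (t i)) * ∏ i, B i) * A ^ ((n:ℝ)-s) := by
          ring
  have hApow2_ne0 : A ^ ((n:ℝ)-s) ≠ 0 := by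
    simp only [ne_eq, ENNReal.rpow_eq_zero_iff, not_or, not_and, not_lt]
    exact ⟨fun h => absurd h hA0', fun h => absurd h hAtop⟩
  have hApow2_top : A ^ ((n:ℝ)-s) ≠ ⊤ :=
    ENNReal.rpow_ne_top_of_nonneg (by linarith) hAtop
  exact (ENNReal.mul_le_mul_iff_left hApow2_ne0 hApow2_top).mp hcan

end TroisiAux

/-- **Troisi's anisotropic Sobolev inequality, product form.**
Let `n ≥ 2`, `1 ≤ pᵢ < ∞`, `1/p = (1/n)∑ᵢ 1/pᵢ` with `∑ᵢ 1/pᵢ > 1`, and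
`p* = np/(n−p)`. Then there is `C = C(n, p₁,…,pₙ)` such that for all
`u ∈ C_c^∞(ℝⁿ)`:
`(∫ |u|^{p*})^{n/p*} ≤ C ∏ᵢ (∫ |∂u/∂xᵢ|^{pᵢ})^{1/pᵢ}`. -/
theorem stmt9 (n : ℕ) (hn : 2 ≤ n) (p : Fin n → ℝ) (hp : ∀ i, 1 ≤ p i)
    (hsum : 1 < ∑ i, 1 / p i) :
    ∃ C : ℝ, 0 < C ∧
      ∀ u : EuclideanSpace ℝ (Fin n) → ℝ,
        ContDiff ℝ (⊤ : ℕ∞) u → HasCompactSupport u →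
        (∫ x, |u x| ^ pstar n p) ^ ((n : ℝ) / pstar n p) ≤
          C * ∏ i,
            (∫ x, |fderiv ℝ u x (EuclideanSpace.single i 1)| ^ p i) ^ (1 / p i) := by
  classical
  set s := ∑ i, 1 / p i with hsdef
  have hip : ∀ i, 0 < p i := fun i => lt_of_lt_of_le one_pos (hp i)
  have hinv1 : ∀ i, 1 / p i ≤ 1 := fun i => by
    rw [div_le_one (hip i)]; exact hp i
  have hs1 : 1 < s := hsum
  have hn0 : (0:ℝ) < n := by positivity
  have hn2 : (2:ℝ) ≤ (n:ℝ) := by exact_mod_cast hn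
  have hsn : s ≤ n := by
    calc s ≤ ∑ _i : Fin n, (1:ℝ) := Finset.sum_le_sum fun i _ => hinv1 i
    _ = n := by simp
  have hq0 : 0 < qT n p := by
    rw [qT, ← hsdef]
    exact div_pos hn0 (by linarith)
  have hnne : (n:ℝ) ≠ 0 := hn0.ne'
  have hpstar : pstar n p = qT n p := by
    have hs0 : s ≠ 0 := by linarith
    have hsm : s - 1 ≠ 0 := by linarith
    have hnne : (n:ℝ) ≠ 0 := hn0.ne'
    have h1 : (n:ℝ)*(s-1)/s = (n:ℝ) - (n:ℝ)/s := by
      rw [mul_sub, mul_one, sub_div, mul_div_assoc, div_self hs0, mul_one]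
    have hd : (n:ℝ) - (n:ℝ)/s ≠ 0 := by
      rw [← h1]
      exact ne_of_gt (div_pos (mul_pos hn0 (by linarith)) (by linarith))
    rw [pstar, pbar, qT, ← hsdef]
    rw [div_eq_div_iff hd hsm, ← h1]
    field_simp
  have hnq : (n:ℝ) / qT n p = s - 1 := by
    rw [qT, ← hsdef, div_div_eq_mul_div, mul_comm ((n:ℝ)) (s-1), mul_div_assoc,
      div_self hnne, mul_one]
  have hinv0 : ∀ i, 0 < 1 / p i := fun i => div_pos one_pos (hip i)
  have htT1 : ∀ i, 1 ≤ tT n p i := fun i => by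
    rw [tT]
    nlinarith [hinv1 i, hq0]
  set C : ℝ := (n:ℝ) ^ (n:ℝ) * ∏ i, tT n p i with hCdef
  have hC : 0 < C := by
    apply mul_pos (Real.rpow_pos_of_pos hn0 _)
    exact Finset.prod_pos fun i _ => lt_of_lt_of_le one_pos (htT1 i)
  refine ⟨C, hC, ?_⟩
  intro u hu h2u
  have hu1 : ContDiff ℝ 1 u := hu.of_le (by exact_mod_cast le_top)
  set e := (EuclideanSpace.equiv (Fin n) ℝ).symm with he
  set v : (Fin n → ℝ) → ℝ := fun y => u (e y) with hv
  have hv1 : ContDiff ℝ 1 v := hu1.comp e.contDiff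
  have h2v : HasCompactSupport v := h2u.comp_homeomorph e.toHomeomorph
  have hd : ∀ (i : Fin n) (y : Fin n → ℝ), fderiv ℝ v y (Pi.single i 1) =
      fderiv ℝ u (e y) (EuclideanSpace.single i 1) := by
    intro i y
    have : fderiv ℝ v y = (fderiv ℝ u (e y)).comp (e : (Fin n → ℝ) →L[ℝ] _) := by
      show fderiv ℝ (u ∘ e) y = _
      rw [fderiv_comp y (hu1.differentiable one_ne_zero _) e.differentiableAt, e.fderiv]
    rw [this]
    rfl
  have MP := (EuclideanSpace.volume_preserving_symm_measurableEquiv_toLp (Fin n)).symm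
  have hfc : Continuous (fderiv ℝ v) := hv1.continuous_fderiv one_ne_zero
  have hDci : ∀ i, Continuous fun y => fderiv ℝ v y (Pi.single i 1) := by
    intro i
    exact (ContinuousLinearMap.apply ℝ ℝ (Pi.single i (1:ℝ))).continuous.comp hfc
  have hDcs : ∀ i, HasCompactSupport fun y => fderiv ℝ v y (Pi.single i 1) := by
    intro i
    have : (fun y => fderiv ℝ v y (Pi.single i (1:ℝ))) =
        (fun L : (Fin n → ℝ) →L[ℝ] ℝ => L (Pi.single i 1)) ∘ (fderiv ℝ v) := rfl
    rw [this]
    exact (h2v.fderiv (𝕜 := ℝ)).comp_left rfl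
  set L : Fin n → ℝ≥0∞ :=
    fun i => ∫⁻ y, (‖fderiv ℝ v y (Pi.single i 1)‖₊ : ℝ≥0∞) ^ p i with hLdef
  have hLtop : ∀ i, L i ≠ ⊤ := fun i => aux_lint_ne_top (hDci i) (hDcs i) (hip i)
  -- rewrite the integrals in the goal
  have hIu : ∫ x, |u x| ^ pstar n p = (∫⁻ y, (‖v y‖₊ : ℝ≥0∞) ^ qT n p).toReal := by
    rw [hpstar]
    have h1 : ∫ x, |u x| ^ qT n p = ∫ y, |v y| ^ qT n p := by
      rw [← MP.integral_comp (MeasurableEquiv.measurableEmbedding _)]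
      rfl
    rw [h1, integral_eq_lintegral_of_nonneg_ae
      (Filter.Eventually.of_forall fun y => by positivity)
      ((hv1.continuous.abs.rpow_const fun y => Or.inr hq0.le).aestronglyMeasurable)]
    congr 1
    exact lintegral_congr fun y => (aux_coe_rpow _ hq0.le).symm
  have hIDi : ∀ i, ∫ x, |fderiv ℝ u x (EuclideanSpace.single i 1)| ^ p i =
      (L i).toReal := by
    intro i
    have h1 : ∫ x, |fderiv ℝ u x (EuclideanSpace.single i 1)| ^ p i =
        ∫ y, |fderiv ℝ v y (Pi.single i 1)| ^ p i := by
      rw [← MP.integral_comp (MeasurableEquiv.measurableEmbedding _)]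
      congr 1
      funext y
      rw [hd i y]
      rfl
    rw [h1, integral_eq_lintegral_of_nonneg_ae
      (Filter.Eventually.of_forall fun y => by positivity)
      (((hDci i).abs.rpow_const fun y => Or.inr (hip i).le).aestronglyMeasurable)]
    rw [hLdef]
    congr 1
    exact lintegral_congr fun y => (aux_coe_rpow _ (hip i).le).symm
  rw [hIu, hpstar, hnq]
  simp_rw [hIDi]
  simp_rw [ENNReal.toReal_rpow]
  set A := ∫⁻ y, (‖v y‖₊ : ℝ≥0∞) ^ qT n p with hAdef
  rcases eq_or_ne A 0 with hA | hA
  · rw [hA]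
    simp only [ENNReal.zero_rpow_of_pos (by linarith : (0:ℝ) < s - 1), ENNReal.toReal_zero]
    exact mul_nonneg hC.le
      (Finset.prod_nonneg fun i _ => ENNReal.toReal_nonneg)
  · have key := troisi_key n hn p hp hsum v hv1 h2v hA
    rw [← hsdef] at key
    have hRtop : ((n:ℝ≥0∞) ^ (n:ℝ) * (∏ i, ENNReal.ofReal (tT n p i)) *
        ∏ i, (L i) ^ (1 / p i)) ≠ ⊤ := by
      apply ENNReal.mul_ne_top
      apply ENNReal.mul_ne_top
      · exact ENNReal.rpow_ne_top_of_nonneg (by positivity) (ENNReal.natCast_ne_top n)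
      · exact (ENNReal.prod_lt_top fun i _ => ENNReal.ofReal_lt_top).ne
      · exact (ENNReal.prod_lt_top fun i _ =>
          (ENNReal.rpow_ne_top_of_nonneg (hinv0 i).le (hLtop i)).lt_top).ne
    calc (A ^ (s-1)).toReal
        ≤ ((n:ℝ≥0∞) ^ (n:ℝ) * (∏ i, ENNReal.ofReal (tT n p i)) *
            ∏ i, (L i) ^ (1 / p i)).toReal := ENNReal.toReal_mono hRtop key
      _ = C * ∏ i, ((L i) ^ (1 / p i)).toReal := by
          rw [ENNReal.toReal_mul, ENNReal.toReal_mul, ENNReal.toReal_prod,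
            ENNReal.toReal_prod]
          congr 1
          rw [hCdef]
          congr 1
          · rw [← ENNReal.toReal_rpow]
            norm_num
          · exact Finset.prod_congr rfl fun i _ =>
              ENNReal.toReal_ofReal (by linarith [htT1 i])
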